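/- Let π ∈ S_n and let r be an integer with 1 ≤ r < n/2. Then log N(B(π, r), r/4) ≥ (r/5)·log(n/r), where B(π, r) = {σ ∈ S_n : d_KT(π, σ) ≤ r}. -/

import Mathlib

open Finset

/-- Kendall tau distance between two permutations of `Fin n`. -/
def dKT (n : ℕ) (π σ : Equiv.Perm (Fin n)) : ℕ :=
  (Finset.univ.filter fun q : Fin n × Fin n => σ q.1 < σ q.2 ∧ π q.2 < π q.1).card

/-- The ball of radius `r` around `π` in the Kendall tau distance. -/
noncomputable def ballKT (n : ℕ) (π : Equiv.Perm (Fin n)) (r : ℝ) :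
    Finset (Equiv.Perm (Fin n)) :=
  Finset.univ.filter fun σ => (dKT n π σ : ℝ) ≤ r

/-- The `ε`-covering number of `S ⊆ S_n` w.r.t. the Kendall tau distance. -/
noncomputable def coverNum (n : ℕ) (S : Finset (Equiv.Perm (Fin n))) (ε : ℝ) : ℕ :=
  sInf {k : ℕ | ∃ T : Finset (Equiv.Perm (Fin n)), T.card = k ∧
    ∀ σ ∈ S, ∃ τ ∈ T, (dKT n σ τ : ℝ) ≤ ε}

namespace KT
variable {n : ℕ}

lemma dKT_eq_one (π σ : Equiv.Perm (Fin n)) : dKT n π σ = dKT n 1 (σ * π⁻¹) := by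
  unfold dKT
  apply Finset.card_nbij' (fun q => (π q.1, π q.2)) (fun q => (π⁻¹ q.1, π⁻¹ q.2))
  · intro q hq
    simp only [Finset.mem_coe, mem_filter, mem_univ, true_and] at hq ⊢
    simpa using hq
  · intro q hq
    simp only [Finset.mem_coe, mem_filter, mem_univ, true_and] at hq ⊢
    simpa using hq
  · intro q _; simp
  · intro q _; simp

lemma dKT_self (σ : Equiv.Perm (Fin n)) : dKT n σ σ = 0 := by
  unfold dKT
  rw [Finset.card_eq_zero, Finset.filter_eq_empty_iff]
  rintro q -
  rintro ⟨h1, h2⟩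
  exact absurd (h1.trans h2) (lt_irrefl _)

/-- the Lehmer-type code: number of later positions with smaller value. -/
def code' (σ : Equiv.Perm (Fin n)) (i : Fin n) : ℕ :=
  (Finset.univ.filter fun j => i < j ∧ σ j < σ i).card

lemma code'_lt (σ : Equiv.Perm (Fin n)) (i : Fin n) : code' σ i < n - i.val := by
  have h1 : (Finset.univ.filter fun j => i < j ∧ σ j < σ i) ⊆ Finset.Ioi i := by
    intro j hj
    simp only [mem_filter] at hj
    exact Finset.mem_Ioi.2 hj.2.1
  have := Finset.card_le_card h1
  rw [Fin.card_Ioi] at this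
  have : code' σ i ≤ n - 1 - i.val := this
  omega

lemma sum_code' (σ : Equiv.Perm (Fin n)) : ∑ i, code' σ i = dKT n 1 σ := by
  unfold dKT
  rw [Finset.card_eq_sum_card_fiberwise (f := Prod.snd) (t := Finset.univ)
    (fun x _ => Finset.mem_univ _)]
  apply Finset.sum_congr rfl
  intro i _
  rw [code']
  apply Finset.card_nbij (fun j => (j, i))
  · intro j hj
    simp only [Finset.mem_coe, mem_filter, mem_univ, true_and] at hj
    exact mem_filter.2 ⟨mem_filter.2 ⟨mem_univ _, hj.2, by simpa using hj.1⟩, rfl⟩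
  · intro a _ b _ h
    exact congrArg Prod.fst h
  · intro p hp
    simp only [Finset.mem_coe, mem_filter, mem_univ, true_and,
      Equiv.Perm.one_apply] at hp
    obtain ⟨hp1, h3⟩ := hp
    obtain ⟨h1, h2⟩ := (Finset.mem_filter.1 hp1).2
    refine ⟨p.1, ?_, ?_⟩
    · simp only [Finset.mem_coe, mem_filter, mem_univ, true_and]
      rw [h3] at h1 h2
      exact ⟨h2, h1⟩
    · exact Prod.ext rfl h3.symm


lemma card_lt_val (σ : Equiv.Perm (Fin n)) (i : Fin n) :
    (Finset.univ.filter fun j => σ j < σ i).card = (σ i : ℕ) := by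
  rw [← Fin.card_Iio (σ i)]
  apply Finset.card_nbij (fun j => σ j)
  · intro j hj
    simp only [Finset.mem_coe, mem_filter, mem_univ, true_and] at hj
    exact Finset.mem_Iio.2 hj
  · intro a _ b _ h
    exact σ.injective h
  · intro y hy
    simp only [coe_Iio, Set.mem_Iio] at hy
    refine ⟨σ⁻¹ y, ?_, by simp⟩
    simp only [coe_filter, Set.mem_setOf_eq, mem_univ, true_and]
    simpa using hy

lemma code'_eq (σ : Equiv.Perm (Fin n)) (i : Fin n) :
    code' σ i + (Finset.univ.filter fun j => j < i ∧ σ j < σ i).card = (σ i : ℕ) := by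
  rw [← card_lt_val σ i]
  rw [← Finset.card_filter_add_card_filter_not
    (s := Finset.univ.filter fun j => σ j < σ i) (p := fun j => i < j)]
  congr 1
  · apply congrArg Finset.card
    rw [Finset.filter_filter]
    apply Finset.filter_congr
    intro j _
    exact ⟨fun ⟨h1, h2⟩ => ⟨h2, h1⟩, fun ⟨h1, h2⟩ => ⟨h2, h1⟩⟩
  · apply congrArg Finset.card
    rw [Finset.filter_filter]
    apply Finset.filter_congr
    intro j _
    constructor
    · rintro ⟨h1, h2⟩
      exact ⟨h2, not_lt.2 h1.le⟩
    · rintro ⟨h1, h2⟩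
      rcases lt_or_eq_of_le (not_lt.1 h2) with hlt | heq
      · exact ⟨hlt, h1⟩
      · exact absurd (heq ▸ h1) (lt_irrefl _)

lemma code'_injective : Function.Injective (fun σ : Equiv.Perm (Fin n) => code' σ) := by
  have main : ∀ (σ τ : Equiv.Perm (Fin n)) (i : Fin n), code' σ = code' τ →
      (∀ j, j < i → σ j = τ j) → σ i < τ i → False := by
    intro σ τ i h hlt hst
    have key : ∀ (ρ : Equiv.Perm (Fin n)),
        (Finset.univ.filter fun j => j < i ∧ ρ j < ρ i).card
        = ((Finset.univ.filter fun j => j < i).image ρ |>.filter fun v => v < ρ i).card := by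
      intro ρ
      rw [Finset.filter_image,
        Finset.card_image_of_injOn (Set.injOn_of_injective ρ.injective),
        Finset.filter_filter]
    have himg : (Finset.univ.filter fun j => j < i).image σ
        = (Finset.univ.filter fun j => j < i).image τ := by
      apply Finset.image_congr
      intro j hj
      simp only [coe_filter, Set.mem_setOf_eq] at hj
      exact hlt j hj.2
    have e1 : code' σ i
        + (((Finset.univ.filter fun j => j < i).image τ).filter fun v => v < σ i).card
        = (σ i : ℕ) := by
      rw [← code'_eq σ i, key σ, himg]
    have e2 : code' τ i
        + (((Finset.univ.filter fun j => j < i).image τ).filter fun v => v < τ i).card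
        = (τ i : ℕ) := by
      rw [← code'_eq τ i, key τ]
    have hcode : code' σ i = code' τ i := by rw [h]
    have hAB : (((Finset.univ.filter fun j => j < i).image τ).filter fun v => v < σ i)
        ⊆ (((Finset.univ.filter fun j => j < i).image τ).filter fun v => v < τ i) := by
      intro v hv
      rw [Finset.mem_filter] at hv ⊢
      exact ⟨hv.1, hv.2.trans hst⟩
    have hsdiff : ((((Finset.univ.filter fun j => j < i).image τ).filter fun v => v < τ i)
        \ (((Finset.univ.filter fun j => j < i).image τ).filter fun v => v < σ i))
        ⊆ Finset.Ioo (σ i) (τ i) := by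
      intro v hv
      simp only [Finset.mem_sdiff, Finset.mem_filter, not_and, Finset.mem_Ioo] at hv ⊢
      obtain ⟨⟨hvS, hvt⟩, hns⟩ := hv
      have h2 : ¬ v < σ i := fun hc => hns hvS hc
      have hne : v ≠ σ i := by
        rintro rfl
        simp only [Finset.mem_image, Finset.mem_filter, Finset.mem_univ, true_and] at hvS
        obtain ⟨j, hj, hje⟩ := hvS
        have hsj : σ j = σ i := by rw [hlt j hj]; exact hje
        have := σ.injective hsj
        subst this
        exact absurd hj (lt_irrefl _)
      exact ⟨lt_of_le_of_ne (not_lt.1 h2) (Ne.symm hne), hvt⟩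
    have hcard := Finset.card_le_card hsdiff
    rw [Finset.card_sdiff_of_subset hAB, Fin.card_Ioo] at hcard
    have hA := Finset.card_le_card hAB
    have hv1 : (σ i : ℕ) < (τ i : ℕ) := hst
    omega
  intro σ τ h
  by_contra hne
  have hex : ∃ i, σ i ≠ τ i := by
    by_contra hc
    push_neg at hc
    exact hne (Equiv.ext hc)
  have hsne : (Finset.univ.filter fun i => σ i ≠ τ i).Nonempty := by
    obtain ⟨i, hi⟩ := hex
    exact ⟨i, by simp [hi]⟩
  have hmem : σ ((Finset.univ.filter fun i => σ i ≠ τ i).min' hsne)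
      ≠ τ ((Finset.univ.filter fun i => σ i ≠ τ i).min' hsne) :=
    (Finset.mem_filter.1 (Finset.min'_mem _ hsne)).2
  have hbelow : ∀ j, j < (Finset.univ.filter fun i => σ i ≠ τ i).min' hsne → σ j = τ j := by
    intro j hj
    by_contra hc
    have : (Finset.univ.filter fun i => σ i ≠ τ i).min' hsne ≤ j :=
      Finset.min'_le _ j (by simp [hc])
    exact absurd (lt_of_lt_of_le hj this) (lt_irrefl _)
  rcases lt_or_gt_of_ne hmem with hlt | hgt
  · exact main σ τ _ h hbelow hlt
  · exact main τ σ _ h.symm (fun j hj => (hbelow j hj).symm) hgt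


def capSet (n : ℕ) : Finset (Fin n → ℕ) :=
  Fintype.piFinset fun i : Fin n => Finset.range (n - i.val)

lemma mem_capSet {c : Fin n → ℕ} : c ∈ capSet n ↔ ∀ i, c i < n - i.val := by
  simp [capSet, Fintype.mem_piFinset]

lemma card_capSet : (capSet n).card = Nat.factorial n := by
  rw [capSet, Fintype.card_piFinset]
  simp only [Finset.card_range]
  induction n with
  | zero => simp
  | succ m ih =>
    rw [Fin.prod_univ_succ]
    simp only [Fin.val_zero, Nat.sub_zero, Fin.val_succ]
    rw [Nat.factorial_succ]
    congr 1
    rw [← ih]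
    apply Finset.prod_congr rfl
    intro i _
    omega

lemma image_code_eq :
    (Finset.univ.image fun σ : Equiv.Perm (Fin n) => code' σ) = capSet n := by
  apply Finset.eq_of_subset_of_card_le
  · intro c hc
    simp only [Finset.mem_image] at hc
    obtain ⟨σ, _, rfl⟩ := hc
    exact mem_capSet.2 (code'_lt σ)
  · rw [card_capSet, Finset.card_image_of_injective _ code'_injective]
    simp [Fintype.card_perm]

lemma card_bset (R : ℕ) :
    ((capSet n).filter fun c => ∑ i, c i ≤ R).card
    = (Finset.univ.filter fun μ : Equiv.Perm (Fin n) => dKT n 1 μ ≤ R).card := by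
  rw [← image_code_eq, Finset.filter_image,
    Finset.card_image_of_injective _ code'_injective]
  apply congrArg Finset.card
  apply Finset.filter_congr
  intro σ _
  rw [sum_code' σ]


lemma card_filter_val_lt (m : ℕ) (h : m ≤ n) :
    (Finset.univ.filter fun i : Fin n => i.val < m).card = m := by
  have e : (Finset.univ : Finset (Fin m)).card
      = (Finset.univ.filter fun i : Fin n => i.val < m).card := by
    apply Finset.card_nbij (fun j : Fin m => Fin.castLE h j)
    · intro j _
      simp only [Finset.mem_coe, Finset.mem_filter, Finset.mem_univ, true_and, Fin.coe_castLE]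
      exact j.isLt
    · intro a _ b _ hab
      exact Fin.castLE_injective h hab
    · intro i hi
      simp only [Finset.coe_filter, Set.mem_setOf_eq, Finset.mem_univ, true_and] at hi
      exact ⟨⟨i.val, hi⟩, by simp, by apply Fin.ext; simp⟩
  simpa using e.symm

lemma lower_count (r : ℕ) :
    (n - 1).choose r ≤ ((capSet n).filter fun c => ∑ i, c i ≤ r).card := by
  have hcard : ((Finset.univ.filter fun i : Fin n => i.val + 1 < n).powersetCard r).card
      = (n - 1).choose r := by
    rw [Finset.card_powersetCard]
    congr 1
    have : (Finset.univ.filter fun i : Fin n => i.val + 1 < n)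
        = (Finset.univ.filter fun i : Fin n => i.val < n - 1) := by
      apply Finset.filter_congr; intro i _; constructor <;> (intro; omega)
    rw [this, card_filter_val_lt (n - 1) (by omega)]
  rw [← hcard]
  apply Finset.card_le_card_of_injOn (fun S => fun i => if i ∈ S then 1 else 0)
  · intro S hS
    rw [Finset.mem_coe, Finset.mem_powersetCard] at hS
    obtain ⟨hsub, hScard⟩ := hS
    rw [Finset.mem_coe, Finset.mem_filter]
    constructor
    · rw [mem_capSet]
      intro i
      by_cases hi : i ∈ S
      · have := hsub hi
        simp only [Finset.mem_filter] at this
        simp only [hi, if_true]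
        omega
      · simp only [hi, if_false]
        have := i.isLt
        omega
    · have : ∑ i, (if i ∈ S then 1 else 0) = S.card := by
        simp [Finset.sum_boole, Finset.filter_mem_eq_inter]
      rw [this, hScard]
  · intro S hS T hT hf
    ext i
    have := congrFun hf i
    by_cases hiS : i ∈ S <;> by_cases hiT : i ∈ T <;>
      simp_all

lemma sum_Iic_inj {c c' : Fin n → ℕ}
    (h : ∀ i, ∑ j ∈ Finset.Iic i, c j = ∑ j ∈ Finset.Iic i, c' j) : c = c' := by
  have key : ∀ k : ℕ, ∀ i : Fin n, i.val = k → c i = c' i := by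
    intro k
    induction k using Nat.strong_induction_on with
    | _ k IH =>
      intro i hik
      have hsplit : ∀ d : Fin n → ℕ,
          ∑ j ∈ Finset.Iic i, d j = d i + ∑ j ∈ Finset.Iio i, d j := by
        intro d
        rw [← Finset.Iio_insert, Finset.sum_insert (by simp)]
      have hIio : ∑ j ∈ Finset.Iio i, c j = ∑ j ∈ Finset.Iio i, c' j := by
        apply Finset.sum_congr rfl
        intro j hj
        rw [Finset.mem_Iio] at hj
        have hv : j.val < i.val := hj
        exact IH j.val (by omega) j rfl
      have := h i
      rw [hsplit c, hsplit c', hIio] at this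
      omega
  funext i
  exact key i.val i rfl

def psum (c : Fin n → ℕ) (i : Fin n) : ℕ := i.val + ∑ j ∈ Finset.Iic i, c j

lemma psum_strictMono (c : Fin n → ℕ) : StrictMono (psum c) := by
  intro a b hab
  have h1 : ∑ j ∈ Finset.Iic a, c j ≤ ∑ j ∈ Finset.Iic b, c j :=
    Finset.sum_le_sum_of_subset (Finset.Iic_subset_Iic.2 hab.le)
  have h2 : a.val < b.val := hab
  simp only [psum]
  omega

lemma upper_count (R : ℕ) :
    ((capSet n).filter fun c => ∑ i, c i ≤ R).card ≤ (n + R).choose n := by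
  have htarget : (Finset.powersetCard n (Finset.range (n + R))).card = (n + R).choose n := by
    rw [Finset.card_powersetCard, Finset.card_range]
  rw [← htarget]
  apply Finset.card_le_card_of_injOn (fun c => Finset.univ.image (psum c))
  · intro c hc
    rw [Finset.mem_coe, Finset.mem_filter] at hc
    obtain ⟨-, hsum⟩ := hc
    rw [Finset.mem_coe, Finset.mem_powersetCard]
    constructor
    · intro x hx
      simp only [Finset.mem_image, Finset.mem_univ, true_and] at hx
      obtain ⟨i, rfl⟩ := hx
      rw [Finset.mem_range, psum]
      have h1 : ∑ j ∈ Finset.Iic i, c j ≤ ∑ j, c j :=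
        Finset.sum_le_sum_of_subset (Finset.subset_univ _)
      have := i.isLt
      omega
    · rw [Finset.card_image_of_injective _ (psum_strictMono c).injective]
      simp
  · intro c hc c' hc' himg
    have hcn : (Finset.univ.image (psum c)).card = n := by
      rw [Finset.card_image_of_injective _ (psum_strictMono c).injective]; simp
    have h1 : psum c = (Finset.univ.image (psum c)).orderEmbOfFin hcn :=
      Finset.orderEmbOfFin_unique hcn (fun x => Finset.mem_image_of_mem _ (Finset.mem_univ x))
        (psum_strictMono c)
    have h2 : psum c' = (Finset.univ.image (psum c)).orderEmbOfFin hcn := by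
      apply Finset.orderEmbOfFin_unique hcn
      · intro x
        have himg' : Finset.univ.image (psum c) = Finset.univ.image (psum c') := himg
        rw [himg']
        exact Finset.mem_image_of_mem _ (Finset.mem_univ x)
      · exact psum_strictMono c'
    have hpp : psum c = psum c' := h1.trans h2.symm
    apply sum_Iic_inj
    intro i
    have := congrFun hpp i
    simp only [psum] at this
    omega


lemma cast_descFactorial (m k : ℕ) (h : k ≤ m) :
    ((m.descFactorial k : ℕ) : ℝ) = ∏ j ∈ Finset.range k, ((m : ℝ) - j) := by
  rw [Nat.descFactorial_eq_prod_range]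
  push_cast
  apply Finset.prod_congr rfl
  intro j hj
  rw [Finset.mem_range] at hj
  rw [Nat.cast_sub (by omega)]

lemma choose_cast_eq (m k : ℕ) :
    ((m.choose k : ℕ) : ℝ) * (Nat.factorial k : ℝ) = (m.descFactorial k : ℝ) := by
  rw [Nat.descFactorial_eq_factorial_mul_choose]
  push_cast
  ring

/-- The key product inequality:
`C(n+q,q) * (4/9)^q * ((n-1)/r)^(r-q) ≤ C(n-1,r)` for `4q ≤ r`, `2r+1 ≤ n`. -/
lemma key_prod (n r q : ℕ) (hr : 1 ≤ r) (hq : 4 * q ≤ r) (hn : 2 * r + 1 ≤ n) :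
    ((n + q).choose q : ℝ) * (4 / 9) ^ q * (((n : ℝ) - 1) / r) ^ (r - q)
      ≤ ((n - 1).choose r : ℝ) := by
  have hqr : q ≤ r := by omega
  have hrn : r ≤ n - 1 := by omega
  have hrpos : (0 : ℝ) < r := by positivity
  set f : ℕ → ℝ := fun j =>
    if j < r - q then ((r : ℝ) - j) * (((n : ℝ) - 1) / r) else (4 / 9) * ((n : ℝ) + r - j)
    with hf
  have hprod : ∏ j ∈ Finset.range r, f j ≤ ∏ j ∈ Finset.range r, (((n : ℝ) - 1) - j) := by
    apply Finset.prod_le_prod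
    · intro j hj
      rw [Finset.mem_range] at hj
      simp only [hf]
      split_ifs with hcase
      · have h1 : (j : ℝ) < r := by exact_mod_cast hj
        have h2 : (0:ℝ) ≤ ((n : ℝ) - 1) / r := by
          apply div_nonneg _ hrpos.le
          have : (1:ℝ) ≤ (n:ℝ) := by exact_mod_cast (by omega : 1 ≤ n)
          linarith
        apply mul_nonneg (by linarith) h2
      · have h1 : (j : ℝ) < (n : ℝ) + r := by exact_mod_cast (by omega : j < n + r)
        nlinarith
    · intro j hj
      rw [Finset.mem_range] at hj
      have hj' : (j : ℝ) ≤ (r : ℝ) - 1 := by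
        have h1 : (j:ℝ) + 1 ≤ r := by exact_mod_cast hj
        linarith
      have hn' : (2 * r + 1 : ℝ) ≤ (n : ℝ) := by exact_mod_cast hn
      simp only [hf]
      split_ifs with hcase
      · rw [← mul_div_assoc, div_le_iff₀ hrpos]
        have hjr : (0:ℝ) ≤ (j:ℝ) := by positivity
        nlinarith
      · have hq' : (4 * q : ℝ) ≤ (r : ℝ) := by exact_mod_cast hq
        nlinarith
  have hsplitprod : ∏ j ∈ Finset.range r, f j
      = (∏ j ∈ Finset.range (r - q), f j) * ∏ j ∈ Finset.range q, f ((r - q) + j) := by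
    rw [← Finset.prod_range_add, Nat.sub_add_cancel hqr]
  have hpart1 : ∏ j ∈ Finset.range (r - q), f j
      = ((r.descFactorial (r - q) : ℕ) : ℝ) * (((n : ℝ) - 1) / r) ^ (r - q) := by
    have h1 : ∏ j ∈ Finset.range (r - q), f j
        = ∏ j ∈ Finset.range (r - q), ((r : ℝ) - j) * (((n : ℝ) - 1) / r) :=
      Finset.prod_congr rfl (fun j hj => by
        simp only [hf]; rw [if_pos (Finset.mem_range.1 hj)])
    rw [h1, Finset.prod_mul_distrib, Finset.prod_const, Finset.card_range,
      cast_descFactorial r (r - q) (by omega)]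
  have hpart2 : ∏ j ∈ Finset.range q, f ((r - q) + j)
      = (4 / 9) ^ q * (((n + q).descFactorial q : ℕ) : ℝ) := by
    have h2 : ∏ j ∈ Finset.range q, f ((r - q) + j)
        = ∏ j ∈ Finset.range q, (4 / 9) * (((n + q : ℕ) : ℝ) - j) :=
      Finset.prod_congr rfl (fun j hj => by
        have hjq : j < q := Finset.mem_range.1 hj
        simp only [hf]
        rw [if_neg (by omega)]
        have hc : ((r - q + j : ℕ) : ℝ) = (r : ℝ) - q + j := by
          push_cast [Nat.cast_sub hqr]; ring
        rw [hc]
        push_cast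
        ring)
    rw [h2, Finset.prod_mul_distrib, Finset.prod_const, Finset.card_range,
      cast_descFactorial (n + q) q (by omega)]
  have hRHS : ∏ j ∈ Finset.range r, (((n : ℝ) - 1) - j)
      = (((n - 1).descFactorial r : ℕ) : ℝ) := by
    rw [cast_descFactorial (n - 1) r hrn]
    apply Finset.prod_congr rfl
    intro j hj
    have : ((n - 1 : ℕ) : ℝ) = (n : ℝ) - 1 := by
      rw [Nat.cast_sub (by omega)]
      norm_num
    rw [this]
  have e1 : (((n - 1).choose r : ℕ) : ℝ) * (Nat.factorial r : ℝ)
      = ((n - 1).descFactorial r : ℝ) := choose_cast_eq _ _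
  have e2 : (((n + q).choose q : ℕ) : ℝ) * (Nat.factorial q : ℝ)
      = ((n + q).descFactorial q : ℝ) := choose_cast_eq _ _
  have e3 : (Nat.factorial q : ℝ) * ((r.descFactorial (r - q) : ℕ) : ℝ)
      = (Nat.factorial r : ℝ) := by
    have h := Nat.factorial_mul_descFactorial (n := r) (k := r - q) (by omega)
    have h2 : r - (r - q) = q := by omega
    rw [h2] at h
    exact_mod_cast congrArg (fun x : ℕ => (x : ℝ)) h
  have hfact : (0:ℝ) < (Nat.factorial r : ℝ) := by positivity
  rw [← mul_le_mul_iff_of_pos_right hfact, e1, ← hRHS]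
  calc ((n + q).choose q : ℝ) * (4 / 9) ^ q * (((n : ℝ) - 1) / r) ^ (r - q)
        * (Nat.factorial r : ℝ)
      = ((r.descFactorial (r - q) : ℕ) : ℝ) * (((n : ℝ) - 1) / r) ^ (r - q)
        * ((4 / 9) ^ q * ((((n + q).choose q : ℕ) : ℝ) * (Nat.factorial q : ℝ))) := by
        rw [← e3]; ring
    _ = (∏ j ∈ Finset.range (r - q), f j) * ∏ j ∈ Finset.range q, f ((r - q) + j) := by
        rw [hpart1, hpart2, e2]
    _ ≤ ∏ j ∈ Finset.range r, (((n : ℝ) - 1) - j) := by rw [← hsplitprod]; exact hprod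


lemma nat_pow_ineq : ∀ r : ℕ, 4 ≤ r → 2 ^ 20 * 9 ^ (5 * r) ≤ 2 ^ (21 * r) := by
  intro r hr
  induction r with
  | zero => omega
  | succ m ih =>
    rcases Nat.lt_or_ge m 4 with hm | hm
    · interval_cases m
      · omega
      · omega
      · omega
      · norm_num
    · have h1 := ih hm
      have h2 : 5 * (m + 1) = 5 * m + 5 := by ring
      have h3 : 21 * (m + 1) = 21 * m + 21 := by ring
      rw [h2, h3, pow_add, pow_add, ← mul_assoc]
      have h9 : (9:ℕ) ^ 5 ≤ 2 ^ 21 := by norm_num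
      calc 2 ^ 20 * 9 ^ (5 * m) * 9 ^ 5 ≤ 2 ^ (21 * m) * 9 ^ 5 :=
            Nat.mul_le_mul_right _ h1
        _ ≤ 2 ^ (21 * m) * 2 ^ 21 := Nat.mul_le_mul_left _ h9

lemma two_rpow_ineq (r q : ℕ) (hr : 4 ≤ r) (hq : 4 * q ≤ r) :
    2 * ((9:ℝ) / 4) ^ q ≤ (2:ℝ) ^ (11 * (r:ℝ) / 20) := by
  have h20 : (0:ℝ) ≤ (2:ℝ) ^ (11 * (r:ℝ) / 20) := Real.rpow_nonneg (by norm_num) _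
  apply le_of_pow_le_pow_left₀ (n := 20) (by norm_num) h20
  have hRHS : ((2:ℝ) ^ (11 * (r:ℝ) / 20)) ^ (20:ℕ) = (2:ℝ) ^ (11 * r) := by
    rw [← Real.rpow_natCast ((2:ℝ) ^ (11 * (r:ℝ) / 20)) 20, ← Real.rpow_mul (by norm_num)]
    have : 11 * (r:ℝ) / 20 * (20:ℕ) = ((11 * r : ℕ) : ℝ) := by push_cast; ring
    rw [this, Real.rpow_natCast]
  rw [hRHS, mul_pow, ← pow_mul]
  have step1 : ((9:ℝ)/4) ^ (q * 20) ≤ ((9:ℝ)/4) ^ (5 * r) := by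
    apply pow_le_pow_right₀ (by norm_num)
    omega
  calc (2:ℝ) ^ (20:ℕ) * ((9:ℝ)/4) ^ (q * 20) ≤ (2:ℝ) ^ (20:ℕ) * ((9:ℝ)/4) ^ (5 * r) := by
        apply mul_le_mul_of_nonneg_left step1 (by positivity)
    _ ≤ (2:ℝ) ^ (11 * r) := by
        rw [div_pow, ← mul_div_assoc, div_le_iff₀ (by positivity)]
        have h4 : ((4:ℝ)) ^ (5 * r) = (2:ℝ) ^ (10 * r) := by
          rw [show ((4:ℝ)) = 2 ^ 2 by norm_num, ← pow_mul]
          congr 1; ring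
        rw [h4, ← pow_add]
        have : 11 * r + 10 * r = 21 * r := by ring
        rw [this]
        have := nat_pow_ineq r hr
        calc (2:ℝ) ^ (20:ℕ) * (9:ℝ) ^ (5 * r) = ((2 ^ 20 * 9 ^ (5 * r) : ℕ) : ℝ) := by
              push_cast; ring
          _ ≤ ((2 ^ (21 * r) : ℕ) : ℝ) := by exact_mod_cast this
          _ = (2:ℝ) ^ (21 * r) := by push_cast; ring

/-- The main analytic inequality. -/
lemma M_ineq (n r : ℕ) (hr : 1 ≤ r) (hn : 2 * r + 1 ≤ n) :
    ((n : ℝ) / r) ^ ((r : ℝ) / 5)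
      ≤ (4 / 9 : ℝ) ^ (r / 4) * (((n : ℝ) - 1) / r) ^ (r - r / 4) := by
  have hrpos : (0:ℝ) < r := by positivity
  have hr1 : (1:ℝ) ≤ r := by exact_mod_cast hr
  have hncast : (2 * r + 1 : ℝ) ≤ (n : ℝ) := by exact_mod_cast hn
  have hnpos : (0:ℝ) < n := by linarith
  set x : ℝ := ((n : ℝ) - 1) / r with hxdef
  set y : ℝ := (n : ℝ) / r with hydef
  have hx2 : (2:ℝ) ≤ x := by
    rw [hxdef, le_div_iff₀ hrpos]; linarith
  have hy2 : (2:ℝ) ≤ y := by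
    rw [hydef, le_div_iff₀ hrpos]; linarith
  have hypos : (0:ℝ) < y := by linarith
  have hxpos : (0:ℝ) < x := by linarith
  have hyx5 : y ≤ x ^ (5:ℕ) := by
    have h1 : y ≤ 2 * x := by
      rw [hydef, hxdef, div_le_iff₀ hrpos]
      have : 2 * (((n:ℝ) - 1) / r) * r = 2 * ((n:ℝ) - 1) := by field_simp
      rw [this]; linarith
    have hx4 : (16:ℝ) ≤ x ^ (4:ℕ) := by
      calc (16:ℝ) = 2 ^ (4:ℕ) := by norm_num
        _ ≤ x ^ (4:ℕ) := pow_le_pow_left₀ (by norm_num) hx2 4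
    have h2 : 2 * x ≤ x ^ (5:ℕ) := by nlinarith [hxpos]
    linarith
  rcases Nat.lt_or_ge r 4 with hr4 | hr4
  -- case r ≤ 3 : q = 0
  · have hq0 : r / 4 = 0 := by omega
    rw [hq0]
    simp only [pow_zero, one_mul, Nat.sub_zero]
    calc y ^ ((r:ℝ)/5) ≤ (x ^ (5:ℕ)) ^ ((r:ℝ)/5) :=
          Real.rpow_le_rpow hypos.le hyx5 (by positivity)
      _ = x ^ (r:ℝ) := by
          rw [← Real.rpow_natCast x 5, ← Real.rpow_mul hxpos.le]
          congr 1
          push_cast; ring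
      _ = x ^ r := Real.rpow_natCast x r
  -- case r ≥ 4
  · set q : ℕ := r / 4 with hqdef
    have hq4 : 4 * q ≤ r := by omega
    have hqr : q ≤ r := by omega
    have hqcast : (q:ℝ) ≤ (r:ℝ) / 4 := by
      rw [le_div_iff₀ (by norm_num)]
      exact_mod_cast by omega
    -- x = y * ((n-1)/n)
    have hw : x = y * (((n:ℝ) - 1) / n) := by
      rw [hxdef, hydef]; field_simp
    have hwb : (1:ℝ) / 2 ≤ (((n:ℝ) - 1) / n) ^ (r - q) := by
      have hform : ((n:ℝ) - 1) / n = 1 + (-1/n) := by field_simp; ring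
      have hber := one_add_mul_le_pow (a := -1/(n:ℝ)) (by
        have h1 : (1:ℝ)/n ≤ 1 := by rw [div_le_one hnpos]; linarith
        have h2 : (-1:ℝ)/n = -(1/n) := by ring
        rw [h2]; linarith) (r - q)
      have hcast : ((r - q : ℕ) : ℝ) ≤ (r:ℝ) := by
        exact_mod_cast Nat.sub_le r q
      have h0 : 1 - (r:ℝ)/n ≤ 1 + ((r - q : ℕ):ℝ) * (-1/n) := by
        have : ((r - q : ℕ):ℝ) * (1/n) ≤ (r:ℝ) * (1/n) := by
          apply mul_le_mul_of_nonneg_right hcast (by positivity)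
        have hrw : ((r - q : ℕ):ℝ) * (-1/n) = -(((r - q : ℕ):ℝ) * (1/n)) := by ring
        have h4 : (r:ℝ) * (1/n) = (r:ℝ)/n := by ring
        rw [hrw]
        linarith
      have h1 : (1:ℝ)/2 ≤ 1 - (r:ℝ)/n := by
        have h5 : (r:ℝ)/n ≤ 1/2 := by rw [div_le_iff₀ hnpos]; linarith
        linarith
      rw [hform]
      calc (1:ℝ)/2 ≤ 1 + ((r - q : ℕ):ℝ) * (-1/n) := by linarith
        _ ≤ (1 + (-1/n)) ^ (r - q) := hber
    -- reduce to the pure exponential inequality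
    have hyrq : y ^ (r - q) = y ^ ((r:ℝ)/5) * y ^ (((r - q : ℕ):ℝ) - (r:ℝ)/5) := by
      rw [← Real.rpow_natCast y (r - q), ← Real.rpow_add hypos]
      congr 1; ring
    have hE : 11 * (r:ℝ) / 20 ≤ ((r - q : ℕ):ℝ) - (r:ℝ)/5 := by
      have hcast : ((r - q : ℕ):ℝ) = (r:ℝ) - q := by
        rw [Nat.cast_sub hqr]
      rw [hcast]
      linarith
    have hexp : 2 * ((9:ℝ)/4) ^ q ≤ y ^ (((r - q : ℕ):ℝ) - (r:ℝ)/5) := by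
      calc 2 * ((9:ℝ)/4) ^ q ≤ (2:ℝ) ^ (11 * (r:ℝ)/20) := two_rpow_ineq r q hr4 hq4
        _ ≤ (2:ℝ) ^ (((r - q : ℕ):ℝ) - (r:ℝ)/5) :=
            Real.rpow_le_rpow_of_exponent_le (by norm_num) hE
        _ ≤ y ^ (((r - q : ℕ):ℝ) - (r:ℝ)/5) := by
            apply Real.rpow_le_rpow (by norm_num) hy2
            linarith
    -- put everything together
    have hrq : r - r / 4 = r - q := by rw [hqdef]
    rw [hrq, hw, mul_pow]
    have hkey : y ^ ((r:ℝ)/5)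
        ≤ (4/9 : ℝ)^q * (y ^ (r - q) * (((n:ℝ) - 1)/n) ^ (r - q)) := by
      rw [hyrq]
      have h49 : (0:ℝ) < (4/9 : ℝ)^q := by positivity
      have hstep : (1:ℝ) ≤ (4/9 : ℝ)^q * (y ^ (((r - q : ℕ):ℝ) - (r:ℝ)/5) * (1/2)) := by
        have h2 : 2 * ((9:ℝ)/4) ^ q * ((4/9 : ℝ)^q * (1/2))
            ≤ y ^ (((r - q : ℕ):ℝ) - (r:ℝ)/5) * ((4/9 : ℝ)^q * (1/2)) := by
          apply mul_le_mul_of_nonneg_right hexp (by positivity)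
        have h3 : 2 * ((9:ℝ)/4) ^ q * ((4/9 : ℝ)^q * (1/2)) = 1 := by
          have h4 : ((9:ℝ)/4) ^ q * ((4:ℝ)/9) ^ q = 1 := by
            rw [← mul_pow]
            norm_num
          calc 2 * ((9:ℝ)/4) ^ q * ((4/9 : ℝ)^q * (1/2))
              = (((9:ℝ)/4) ^ q * ((4:ℝ)/9) ^ q) * (2 * (1/2)) := by ring
            _ = 1 := by rw [h4]; norm_num
        rw [h3] at h2
        calc (1:ℝ) ≤ y ^ (((r - q : ℕ):ℝ) - (r:ℝ)/5) * ((4/9 : ℝ)^q * (1/2)) := h2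
          _ = (4/9 : ℝ)^q * (y ^ (((r - q : ℕ):ℝ) - (r:ℝ)/5) * (1/2)) := by ring
      have hwpos : (0:ℝ) < y ^ ((r:ℝ)/5) := Real.rpow_pos_of_pos hypos _
      have hmul := mul_le_mul_of_nonneg_left hstep hwpos.le
      calc y ^ ((r:ℝ)/5)
          = y ^ ((r:ℝ)/5) * 1 := by ring
        _ ≤ y ^ ((r:ℝ)/5) * ((4/9 : ℝ)^q * (y ^ (((r - q : ℕ):ℝ) - (r:ℝ)/5) * (1/2))) := by
            rw [mul_one] at hmul ⊢
            exact hmul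
        _ ≤ (4/9 : ℝ)^q * (y ^ ((r:ℝ)/5) * y ^ (((r - q : ℕ):ℝ) - (r:ℝ)/5)
              * (((n:ℝ) - 1)/n) ^ (r - q)) := by
            have hy5pos : (0:ℝ) ≤ y ^ ((r:ℝ)/5) := hwpos.le
            have hyEpos : (0:ℝ) ≤ y ^ (((r - q : ℕ):ℝ) - (r:ℝ)/5) :=
              (Real.rpow_pos_of_pos hypos _).le
            have := mul_le_mul_of_nonneg_left hwb
              (by positivity : (0:ℝ) ≤ (4/9 : ℝ)^q * (y ^ ((r:ℝ)/5)
                * y ^ (((r - q : ℕ):ℝ) - (r:ℝ)/5)))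
            calc y ^ ((r:ℝ)/5) * ((4/9 : ℝ)^q * (y ^ (((r - q : ℕ):ℝ) - (r:ℝ)/5) * (1/2)))
                = (4/9 : ℝ)^q * (y ^ ((r:ℝ)/5) * y ^ (((r - q : ℕ):ℝ) - (r:ℝ)/5)) * (1/2)
                := by ring
              _ ≤ (4/9 : ℝ)^q * (y ^ ((r:ℝ)/5) * y ^ (((r - q : ℕ):ℝ) - (r:ℝ)/5))
                  * (((n:ℝ) - 1)/n) ^ (r - q) := by
                  calc (4/9 : ℝ)^q * (y ^ ((r:ℝ)/5) * y ^ (((r - q : ℕ):ℝ) - (r:ℝ)/5)) * (1/2)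
                      = (4/9 : ℝ)^q * (y ^ ((r:ℝ)/5) * y ^ (((r - q : ℕ):ℝ) - (r:ℝ)/5)) * ((1:ℝ)/2)
                      := by ring
                    _ ≤ _ := by
                        apply mul_le_mul_of_nonneg_left hwb (by positivity)
              _ = (4/9 : ℝ)^q * (y ^ ((r:ℝ)/5) * y ^ (((r - q : ℕ):ℝ) - (r:ℝ)/5)
                  * (((n:ℝ) - 1)/n) ^ (r - q)) := by ring
    exact hkey


end KT

open KT in
/-- **Lemma 2.**  For an integer `1 ≤ r < n/2`,
`log N(B(π, r), r/4) ≥ (r/5) log(n/r)`. -/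
theorem cover_number_small_ball_lower (n : ℕ) (π : Equiv.Perm (Fin n)) (r : ℕ)
    (hr1 : 1 ≤ r) (hr2 : (r : ℝ) < (n : ℝ) / 2) :
    (r : ℝ) / 5 * Real.log ((n : ℝ) / (r : ℝ)) ≤
      Real.log (coverNum n (ballKT n π (r : ℝ)) ((r : ℝ) / 4)) := by
  have hn : 2 * r + 1 ≤ n := by
    have h1 : (2 * r : ℝ) < (n : ℝ) := by linarith
    have h2 : 2 * r < n := by exact_mod_cast h1
    omega
  set q : ℕ := r / 4 with hqdef
  have hq4 : 4 * q ≤ r := by omega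
  -- the coverNum set is nonempty
  have hne : {k : ℕ | ∃ T : Finset (Equiv.Perm (Fin n)), T.card = k ∧
      ∀ σ ∈ ballKT n π (r : ℝ), ∃ τ ∈ T, (dKT n σ τ : ℝ) ≤ (r : ℝ) / 4}.Nonempty := by
    refine ⟨(Finset.univ : Finset (Equiv.Perm (Fin n))).card, Finset.univ, rfl, ?_⟩
    intro σ _
    refine ⟨σ, Finset.mem_univ σ, ?_⟩
    rw [dKT_self σ]
    simp only [Nat.cast_zero]
    positivity
  have hmem := Nat.sInf_mem hne
  obtain ⟨T, hTcard, hTcov⟩ := hmem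
  set N : ℕ := coverNum n (ballKT n π (r : ℝ)) ((r : ℝ) / 4) with hNdef
  -- counting chain
  have hlow : (n - 1).choose r
      ≤ (Finset.univ.filter fun μ : Equiv.Perm (Fin n) => dKT n 1 μ ≤ r).card := by
    rw [← card_bset r]; exact lower_count r
  have hBlow : (Finset.univ.filter fun μ : Equiv.Perm (Fin n) => dKT n 1 μ ≤ r).card
      ≤ (ballKT n π (r : ℝ)).card := by
    apply Finset.card_le_card_of_injOn (fun μ => μ * π)
    · intro μ hμ
      rw [Finset.mem_coe, Finset.mem_filter] at hμ
      rw [Finset.mem_coe, ballKT, Finset.mem_filter]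
      refine ⟨Finset.mem_univ _, ?_⟩
      rw [dKT_eq_one π (μ * π)]
      have he : μ * π * π⁻¹ = μ := by group
      rw [he]
      exact_mod_cast hμ.2
    · intro a _ b _ hab
      exact mul_right_cancel hab
  have hfiber : ∀ τ : Equiv.Perm (Fin n),
      ((ballKT n π (r : ℝ)).filter fun σ => (dKT n σ τ : ℝ) ≤ (r : ℝ) / 4).card
      ≤ (Finset.univ.filter fun μ : Equiv.Perm (Fin n) => dKT n 1 μ ≤ q).card := by
    intro τ
    apply Finset.card_le_card_of_injOn (fun σ => τ * σ⁻¹)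
    · intro σ hσ
      rw [Finset.mem_coe, Finset.mem_filter] at hσ
      rw [Finset.mem_coe, Finset.mem_filter]
      refine ⟨Finset.mem_univ _, ?_⟩
      rw [← dKT_eq_one σ τ]
      have h4 : (dKT n σ τ : ℝ) * 4 ≤ (r : ℝ) := by
        have := hσ.2
        linarith
      have h5 : dKT n σ τ * 4 ≤ r := by exact_mod_cast h4
      omega
    · intro a _ b _ hab
      have : a⁻¹ = b⁻¹ := mul_left_cancel hab
      exact inv_injective this
  have hcover : (ballKT n π (r : ℝ)).card
      ≤ T.card * (Finset.univ.filter fun μ : Equiv.Perm (Fin n) => dKT n 1 μ ≤ q).card := by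
    have hsub : ballKT n π (r : ℝ)
        ⊆ T.biUnion fun τ => (ballKT n π (r : ℝ)).filter fun σ => (dKT n σ τ : ℝ) ≤ (r : ℝ) / 4 := by
      intro σ hσ
      rw [Finset.mem_biUnion]
      obtain ⟨τ, hτT, hτd⟩ := hTcov σ hσ
      exact ⟨τ, hτT, Finset.mem_filter.2 ⟨hσ, hτd⟩⟩
    calc (ballKT n π (r : ℝ)).card ≤ (T.biUnion fun τ => (ballKT n π (r : ℝ)).filter
          fun σ => (dKT n σ τ : ℝ) ≤ (r : ℝ) / 4).card := Finset.card_le_card hsub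
      _ ≤ ∑ τ ∈ T, ((ballKT n π (r : ℝ)).filter fun σ => (dKT n σ τ : ℝ) ≤ (r : ℝ) / 4).card :=
          Finset.card_biUnion_le
      _ ≤ ∑ τ ∈ T, (Finset.univ.filter fun μ : Equiv.Perm (Fin n) => dKT n 1 μ ≤ q).card :=
          Finset.sum_le_sum fun τ _ => hfiber τ
      _ = T.card * _ := by rw [Finset.sum_const, smul_eq_mul]
  have hup : (Finset.univ.filter fun μ : Equiv.Perm (Fin n) => dKT n 1 μ ≤ q).card
      ≤ (n + q).choose q := by
    rw [← card_bset q]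
    calc ((capSet n).filter fun c => ∑ i, c i ≤ q).card ≤ (n + q).choose n := upper_count q
      _ = (n + q).choose q := by
          rw [← Nat.choose_symm (Nat.le_add_left q n)]
          congr 1
          omega
  -- combine in ℕ
  have hnat : (n - 1).choose r ≤ N * ((n + q).choose q) := by
    calc (n - 1).choose r ≤ (ballKT n π (r : ℝ)).card := le_trans hlow hBlow
      _ ≤ T.card * (Finset.univ.filter fun μ : Equiv.Perm (Fin n) => dKT n 1 μ ≤ q).card := hcover
      _ ≤ T.card * ((n + q).choose q) := Nat.mul_le_mul_left _ hup
      _ = N * ((n + q).choose q) := by rw [hTcard, hNdef, coverNum]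
  -- move to ℝ
  have hCpos : (0:ℝ) < ((n + q).choose q : ℝ) := by
    exact_mod_cast Nat.choose_pos (Nat.le_add_left q n)
  have hrpos : (0:ℝ) < (r:ℝ) := by positivity
  have hfinal : ((n : ℝ) / r) ^ ((r : ℝ) / 5) ≤ (N : ℝ) := by
    have h1 : ((n : ℝ) / r) ^ ((r : ℝ) / 5) * ((n + q).choose q : ℝ)
        ≤ (N : ℝ) * ((n + q).choose q : ℝ) := by
      calc ((n : ℝ) / r) ^ ((r : ℝ) / 5) * ((n + q).choose q : ℝ)
          ≤ ((4 / 9 : ℝ) ^ q * (((n : ℝ) - 1) / r) ^ (r - q)) * ((n + q).choose q : ℝ) := by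
            apply mul_le_mul_of_nonneg_right (M_ineq n r hr1 hn) hCpos.le
        _ = ((n + q).choose q : ℝ) * (4 / 9) ^ q * (((n : ℝ) - 1) / r) ^ (r - q) := by ring
        _ ≤ ((n - 1).choose r : ℝ) := key_prod n r q hr1 hq4 hn
        _ ≤ (N : ℝ) * ((n + q).choose q : ℝ) := by exact_mod_cast hnat
    exact (mul_le_mul_iff_of_pos_right hCpos).1 h1
  have hyx : (0:ℝ) < (n:ℝ)/r := by
    have : (0:ℝ) < (n:ℝ) := by
      have : 0 < n := by omega
      exact_mod_cast this
    positivity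
  calc (r : ℝ) / 5 * Real.log ((n : ℝ) / (r : ℝ))
      = Real.log (((n : ℝ) / r) ^ ((r : ℝ) / 5)) := (Real.log_rpow hyx _).symm
    _ ≤ Real.log (N : ℝ) := Real.log_le_log (Real.rpow_pos_of_pos hyx _) hfinal
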